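/- arXiv:2004.06873 — 2 statements merged into one kernel-verified Lean document; each statement's English description precedes it below -/
import Mathlib

section
/- Define h(n) = 2^{-n} · Σ_{j=0}^{n} C(n,j)/(1 + (n−2j)²) and ν(n) = (1 − √(1 − h(n−3)))/2. Then lim_{n→∞} √(2n+1)·ν(2n+1) = (√(2π)/8)·coth(π/2) and lim_{n→∞} √(2n)·ν(2n) = (√(2π)/8)·tanh(π/2). -/
open Real Filter

noncomputable def h (n : ℕ) : ℝ :=
  (∑ j ∈ Finset.range (n + 1), (n.choose j : ℝ) / (1 + ((n : ℝ) - 2 * j) ^ 2)) / 2 ^ n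

open MeasureTheory Set intervalIntegral

lemma laplace_cos (k : ℝ) :
    ∫ t in Ioi (0:ℝ), Real.exp (-t) * Real.cos (k * t) = 1 / (1 + k ^ 2) := by
  have h1 : (0:ℝ) < 1 + k ^ 2 := by positivity
  set F : ℝ → ℝ := fun t => Real.exp (-t) * (k * Real.sin (k*t) - Real.cos (k*t)) / (1 + k ^ 2)
    with hF
  have hderiv : ∀ x ∈ Ici (0:ℝ), HasDerivAt F (Real.exp (-x) * Real.cos (k * x)) x := by
    intro x _
    have he : HasDerivAt (fun t : ℝ => Real.exp (-t)) (-Real.exp (-x)) x := by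
      simpa [Function.comp_def] using (Real.hasDerivAt_exp (-x)).comp x (hasDerivAt_neg x)
    have hs : HasDerivAt (fun t : ℝ => Real.sin (k * t)) (Real.cos (k * x) * k) x := by
      simpa [Function.comp_def] using (Real.hasDerivAt_sin (k * x)).comp x ((hasDerivAt_id x).const_mul k)
    have hc : HasDerivAt (fun t : ℝ => Real.cos (k * t)) (-Real.sin (k * x) * k) x := by
      simpa [Function.comp_def] using (Real.hasDerivAt_cos (k * x)).comp x ((hasDerivAt_id x).const_mul k)
    have := ((he.mul (((hs.const_mul k)).sub hc)).div_const (1 + k ^ 2))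
    refine this.congr_deriv ?_
    simp only [Pi.sub_apply]
    rw [div_eq_iff h1.ne']
    ring
  have hint : IntegrableOn (fun t : ℝ => Real.exp (-t) * Real.cos (k * t)) (Ioi (0:ℝ)) := by
    refine Integrable.mono' (g := fun t : ℝ => Real.exp (-t)) (exp_neg_integrableOn_Ioi 0 one_pos |>.congr_fun (by intro x _; simp) measurableSet_Ioi) ?_ ?_
    · exact (Continuous.aestronglyMeasurable (by continuity))
    · filter_upwards with t
      rw [norm_eq_abs, abs_mul, abs_of_pos (Real.exp_pos _)]
      calc Real.exp (-t) * |Real.cos (k*t)| ≤ Real.exp (-t) * 1 := by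
            gcongr; exact abs_cos_le_one _
      _ = Real.exp (-t) := mul_one _
  have hlim : Tendsto F atTop (nhds 0) := by
    have hb : ∀ t : ℝ, ‖F t‖ ≤ (|k| + 1) / (1 + k ^ 2) * Real.exp (-t) := by
      intro t
      have h2 : |k * Real.sin (k*t) - Real.cos (k*t)| ≤ |k| + 1 := by
        calc |k * Real.sin (k*t) - Real.cos (k*t)| ≤ |k * Real.sin (k*t)| + |Real.cos (k*t)| :=
          abs_sub _ _
        _ ≤ |k| * 1 + 1 := by
            rw [abs_mul]; gcongr
            exacts [abs_sin_le_one _, abs_cos_le_one _]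
        _ = |k| + 1 := by ring
      calc ‖F t‖ = Real.exp (-t) * |k * Real.sin (k*t) - Real.cos (k*t)| / (1 + k ^ 2) := by
            rw [hF]
            simp [abs_div, abs_mul, abs_of_pos h1, abs_of_pos (Real.exp_pos _), Real.norm_eq_abs]
        _ ≤ Real.exp (-t) * (|k| + 1) / (1 + k ^ 2) := by gcongr
        _ = (|k| + 1) / (1 + k ^ 2) * Real.exp (-t) := by ring
    have : Tendsto (fun t : ℝ => (|k| + 1) / (1 + k ^ 2) * Real.exp (-t)) atTop (nhds 0) := by
      simpa using (Real.tendsto_exp_neg_atTop_nhds_zero.const_mul ((|k| + 1) / (1 + k ^ 2)))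
    exact squeeze_zero_norm hb this
  have := integral_Ioi_of_hasDerivAt_of_tendsto'
    (f := F) (f' := fun x => Real.exp (-x) * Real.cos (k * x)) hderiv hint hlim
  rw [this, hF]
  simp only [Real.exp_zero, mul_zero, Real.sin_zero, Real.cos_zero, zero_sub, one_mul, zero_mul]
  field_simp
  simp


lemma binom_cos (n : ℕ) (t : ℝ) :
    ∑ j ∈ Finset.range (n + 1), (n.choose j : ℝ) * Real.cos (((n : ℝ) - 2 * j) * t)
      = (2 * Real.cos t) ^ n := by
  have key : (((2 * Real.cos t : ℝ) : ℂ)) ^ n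
      = ∑ j ∈ Finset.range (n + 1), (Complex.exp ((t:ℂ) * Complex.I)) ^ j *
          (Complex.exp (-(t:ℂ) * Complex.I)) ^ (n - j) * (n.choose j : ℂ) := by
    rw [← add_pow]
    congr 1
    push_cast
    rw [Complex.cos]
    ring
  have h2 : ∀ j ∈ Finset.range (n + 1),
      ((Complex.exp ((t:ℂ) * Complex.I)) ^ j *
        (Complex.exp (-(t:ℂ) * Complex.I)) ^ (n - j) * (n.choose j : ℂ)).re
        = (n.choose j : ℝ) * Real.cos (((n : ℝ) - 2 * j) * t) := by
    intro j hj
    rw [Finset.mem_range, Nat.lt_succ_iff] at hj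
    rw [← Complex.exp_nat_mul, ← Complex.exp_nat_mul, ← Complex.exp_add]
    have e1 : (j : ℂ) * ((t:ℂ) * Complex.I) + ((n - j : ℕ) : ℂ) * (-(t:ℂ) * Complex.I)
        = (((2 * (j:ℝ) - n) * t : ℝ) : ℂ) * Complex.I := by
      push_cast [Nat.cast_sub hj]
      ring
    rw [e1, mul_comm]
    have e2 : ((n.choose j : ℕ) : ℂ) = (((n.choose j : ℕ) : ℝ) : ℂ) := by push_cast; rfl
    rw [e2, Complex.re_ofReal_mul, Complex.exp_ofReal_mul_I_re]
    rw [show (2 * (j:ℝ) - n) * t = -(((n:ℝ) - 2 * j) * t) by ring, Real.cos_neg]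
  calc ∑ j ∈ Finset.range (n + 1), (n.choose j : ℝ) * Real.cos (((n : ℝ) - 2 * j) * t)
      = (((2 * Real.cos t : ℝ) : ℂ) ^ n).re := by
        rw [key, Complex.re_sum]
        exact Finset.sum_congr rfl fun j hj => (h2 j hj).symm
    _ = (2 * Real.cos t) ^ n := by rw [← Complex.ofReal_pow, Complex.ofReal_re]


lemma int_exp_cos (k : ℝ) :
    IntegrableOn (fun t : ℝ => Real.exp (-t) * Real.cos (k * t)) (Ioi (0:ℝ)) := by
  refine Integrable.mono' (g := fun t : ℝ => Real.exp (-t))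
    ((exp_neg_integrableOn_Ioi 0 one_pos).congr_fun (by intro x _; simp) measurableSet_Ioi)
    (Continuous.aestronglyMeasurable (by continuity)) ?_
  filter_upwards with t
  rw [norm_eq_abs, abs_mul, abs_of_pos (Real.exp_pos _)]
  calc Real.exp (-t) * |Real.cos (k * t)| ≤ Real.exp (-t) * 1 := by
        gcongr; exact abs_cos_le_one _
  _ = Real.exp (-t) := mul_one _

lemma int_exp_cospow (n : ℕ) :
    IntegrableOn (fun t : ℝ => Real.exp (-t) * Real.cos t ^ n) (Ioi (0:ℝ)) := by
  refine Integrable.mono' (g := fun t : ℝ => Real.exp (-t))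
    ((exp_neg_integrableOn_Ioi 0 one_pos).congr_fun (by intro x _; simp) measurableSet_Ioi)
    (Continuous.aestronglyMeasurable (by continuity)) ?_
  filter_upwards with t
  rw [norm_eq_abs, abs_mul, abs_of_pos (Real.exp_pos _), abs_pow]
  calc Real.exp (-t) * |Real.cos t| ^ n ≤ Real.exp (-t) * 1 ^ n := by
        gcongr; exact abs_cos_le_one _
  _ = Real.exp (-t) := by rw [one_pow, mul_one]

lemma h_eq (n : ℕ) : h n = ∫ t in Ioi (0:ℝ), Real.exp (-t) * Real.cos t ^ n := by
  have key : ∑ j ∈ Finset.range (n + 1), (n.choose j : ℝ) / (1 + ((n : ℝ) - 2 * j) ^ 2)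
      = 2 ^ n * ∫ t in Ioi (0:ℝ), Real.exp (-t) * Real.cos t ^ n := by
    have e1 : ∀ j, (n.choose j : ℝ) / (1 + ((n : ℝ) - 2 * j) ^ 2)
        = ∫ t in Ioi (0:ℝ),
            (n.choose j : ℝ) * (Real.exp (-t) * Real.cos (((n:ℝ) - 2 * j) * t)) := by
      intro j
      rw [MeasureTheory.integral_const_mul _ _, laplace_cos]
      ring
    rw [Finset.sum_congr rfl fun j _ => e1 j]
    have e2 := MeasureTheory.integral_finset_sum (μ := volume.restrict (Ioi (0:ℝ)))
      (Finset.range (n + 1))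
      (f := fun j t => (n.choose j : ℝ) * (Real.exp (-t) * Real.cos (((n:ℝ) - 2 * j) * t)))
      (fun j _ => ((int_exp_cos ((n:ℝ) - 2 * j)).const_mul _))
    rw [← e2]
    rw [← MeasureTheory.integral_const_mul]
    refine setIntegral_congr_fun measurableSet_Ioi fun t _ => ?_
    have : ∑ j ∈ Finset.range (n + 1),
        (n.choose j : ℝ) * (Real.exp (-t) * Real.cos (((n:ℝ) - 2 * j) * t))
        = Real.exp (-t) * ∑ j ∈ Finset.range (n + 1),
            (n.choose j : ℝ) * Real.cos (((n:ℝ) - 2 * j) * t) := by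
      rw [Finset.mul_sum]; exact Finset.sum_congr rfl fun j _ => by ring
    rw [this, binom_cos]
    ring
  rw [h, key]
  field_simp


noncomputable def W (n : ℕ) : ℝ := ∫ t in (0:ℝ)..(π/2), Real.cos t ^ n

lemma W_zero : W 0 = π / 2 := by simp [W]

lemma W_one : W 1 = 1 := by simp [W]

lemma W_rec (n : ℕ) : W (n + 2) = (n + 1) / (n + 2) * W n := by
  have := integral_cos_pow (a := 0) (b := π/2) (n := n)
  simpa [W, Real.cos_pi_div_two, Real.sin_zero] using this

lemma W_pos (n : ℕ) : 0 < W n := by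
  refine intervalIntegral_pos_of_pos_on ((Real.continuous_cos.pow n).intervalIntegrable _ _)
    (fun x hx => ?_) (by positivity)
  exact pow_pos (Real.cos_pos_of_mem_Ioo ⟨by linarith [hx.1, pi_pos], hx.2⟩) n

lemma W_anti (n : ℕ) : W (n + 1) ≤ W n := by
  refine intervalIntegral.integral_mono_on (by positivity)
    ((Real.continuous_cos.pow _).intervalIntegrable _ _)
    ((Real.continuous_cos.pow _).intervalIntegrable _ _) (fun x hx => ?_)
  exact pow_le_pow_of_le_one (Real.cos_nonneg_of_mem_Icc ⟨by linarith [hx.1, pi_pos], hx.2⟩)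
    (Real.cos_le_one x) (Nat.le_succ n)

lemma W_prod (n : ℕ) : ((n : ℝ) + 1) * W n * W (n + 1) = π / 2 := by
  induction n with
  | zero => simp [W_zero, W_one]
  | succ k ih =>
      rw [W_rec k]
      push_cast
      have : ((k:ℝ) + 1 + 1) * W (k + 1) * (((k:ℝ) + 1) / ((k:ℝ) + 2) * W k)
          = ((k:ℝ) + 1) * W k * W (k + 1) := by
        have hk : ((k:ℝ) + 2) ≠ 0 := by positivity
        field_simp
        ring
      rw [this, ih]

lemma W_ratio : Tendsto (fun n : ℕ => W (n + 1) / W n) atTop (nhds 1) := by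
  have hle : ∀ n : ℕ, ((n:ℝ) + 1) / ((n:ℝ) + 2) ≤ W (n + 1) / W n := by
    intro n
    rw [div_le_div_iff₀ (by positivity) (W_pos n)]
    calc ((n:ℝ) + 1) * W n = ((n:ℝ) + 2) * (((n:ℝ)+1)/((n:ℝ)+2) * W n) := by
          field_simp
      _ = ((n:ℝ) + 2) * W (n + 2) := by rw [← W_rec]
      _ ≤ ((n:ℝ) + 2) * W (n + 1) := by
          have := W_anti (n + 1)
          gcongr
      _ = W (n + 1) * ((n:ℝ) + 2) := by ring
  have hge : ∀ n : ℕ, W (n + 1) / W n ≤ 1 := fun n =>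
    div_le_one_of_le₀ (W_anti n) (W_pos n).le
  refine tendsto_of_tendsto_of_tendsto_of_le_of_le ?_ tendsto_const_nhds hle hge
  have : Tendsto (fun n : ℕ => 1 - 1 / ((n:ℝ) + 2)) atTop (nhds 1) := by
    have h2 : Tendsto (fun n : ℕ => ((n:ℝ) + 2)) atTop atTop :=
      tendsto_natCast_atTop_atTop.atTop_add tendsto_const_nhds
    simpa using tendsto_const_nhds.sub (h2.inv_tendsto_atTop.congr (fun n => (one_div _).symm))
  refine this.congr fun n => ?_
  field_simp
  ring

lemma sqrt_W : Tendsto (fun n : ℕ => Real.sqrt n * W n) atTop (nhds (Real.sqrt (π / 2))) := by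
  have key : Tendsto (fun n : ℕ => (n : ℝ) * W n ^ 2) atTop (nhds (π / 2)) := by
    have e : ∀ n : ℕ, (n : ℝ) * W n ^ 2
        = ((n : ℝ) / ((n:ℝ) + 1)) * (((n:ℝ) + 1) * W n * W (n + 1)) * (W n / W (n + 1)) := by
      intro n
      have h1 : ((n:ℝ) + 1) ≠ 0 := by positivity
      have h2 : W (n + 1) ≠ 0 := (W_pos _).ne'
      field_simp
    have l1 : Tendsto (fun n : ℕ => (n : ℝ) / ((n:ℝ) + 1)) atTop (nhds 1) :=
      tendsto_natCast_div_add_atTop 1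
    have l2 : Tendsto (fun n : ℕ => ((n:ℝ) + 1) * W n * W (n + 1)) atTop (nhds (π / 2)) := by
      simp only [W_prod]; exact tendsto_const_nhds
    have l3 : Tendsto (fun n : ℕ => W n / W (n + 1)) atTop (nhds 1) := by
      have := W_ratio.inv₀ one_ne_zero
      simp only [inv_one] at this
      exact this.congr fun n => by rw [inv_div]
    have := (l1.mul l2).mul l3
    simp only [one_mul, mul_one] at this
    exact this.congr fun n => (e n).symm
  have := key.sqrt
  refine this.congr fun n => ?_
  rw [Real.sqrt_mul (Nat.cast_nonneg n), Real.sqrt_sq (W_pos n).le]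


lemma loc (f : ℝ → ℝ) (hf : Continuous f) :
    Tendsto (fun n : ℕ => Real.sqrt n * ∫ t in (0:ℝ)..(π/2), f t * Real.cos t ^ n) atTop
      (nhds (f 0 * Real.sqrt (π / 2))) := by
  have hsplit : ∀ n : ℕ, (∫ t in (0:ℝ)..(π/2), f t * Real.cos t ^ n)
      = (∫ t in (0:ℝ)..(π/2), (f t - f 0) * Real.cos t ^ n) + f 0 * W n := by
    intro n
    rw [W, ← intervalIntegral.integral_const_mul, ← intervalIntegral.integral_add
      (f := fun t => (f t - f 0) * Real.cos t ^ n) (g := fun t => f 0 * Real.cos t ^ n)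
      (((hf.sub continuous_const).mul (Real.continuous_cos.pow n)).intervalIntegrable _ _)
      ((continuous_const.mul (Real.continuous_cos.pow n)).intervalIntegrable _ _)]
    congr 1; ext t; ring
  have main : Tendsto (fun n : ℕ =>
      Real.sqrt n * ∫ t in (0:ℝ)..(π/2), (f t - f 0) * Real.cos t ^ n) atTop (nhds 0) := by
    rw [NormedAddCommGroup.tendsto_nhds_zero]
    intro ε hε
    -- global bound M
    obtain ⟨x0, _, hx0⟩ := isCompact_Icc.exists_isMaxOn (s := Icc (0:ℝ) (π/2))
      (f := fun t => |f t - f 0|) ⟨0, le_refl 0, by positivity⟩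
      ((hf.sub (continuous_const : Continuous fun _ : ℝ => f 0)).abs.continuousOn)
    set M := |f x0 - f 0| with hM
    have hM0 : 0 ≤ M := abs_nonneg _
    obtain ⟨s, hs⟩ : ∃ s : ℝ, s = Real.sqrt (π/2) := ⟨_, rfl⟩
    have hs0 : 0 ≤ s := hs ▸ Real.sqrt_nonneg _
    have hsq1 : 0 < s + 1 := by linarith
    obtain ⟨ε', hε'⟩ : ∃ e : ℝ, e = ε / (2 * (s + 1)) := ⟨_, rfl⟩
    have hε'0 : 0 < ε' := hε' ▸ div_pos hε (by linarith)
    have hkey : ε' * (s + 1) = ε / 2 := by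
      rw [hε', div_mul_eq_mul_div, mul_div_mul_right _ _ (by linarith : s + 1 ≠ 0)]
    obtain ⟨δ0, hδ0, hδ0'⟩ := Metric.continuousAt_iff.mp (hf.continuousAt (x := 0)) ε' hε'0
    set δ := min (δ0/2) (π/2) with hδ
    have hδpos : 0 < δ := lt_min (by positivity) (by positivity)
    have hδle : δ ≤ π/2 := min_le_right _ _
    have hcosδ : Real.cos δ < 1 := by
      calc Real.cos δ < Real.cos 0 := by
            apply Real.cos_lt_cos_of_nonneg_of_le_pi le_rfl (by linarith [pi_pos]) hδpos
      _ = 1 := Real.cos_zero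
    have hcosδ0 : 0 ≤ Real.cos δ :=
      Real.cos_nonneg_of_mem_Icc ⟨by linarith [pi_pos], hδle⟩
    -- bound near 0
    have hB1 : ∀ n : ℕ, |∫ t in (0:ℝ)..δ, (f t - f 0) * Real.cos t ^ n| ≤ ε' * W n := by
      intro n
      have h1 : |∫ t in (0:ℝ)..δ, (f t - f 0) * Real.cos t ^ n|
          ≤ ∫ t in (0:ℝ)..δ, |(f t - f 0) * Real.cos t ^ n| :=
        intervalIntegral.abs_integral_le_integral_abs hδpos.le
      have h2 : (∫ t in (0:ℝ)..δ, |(f t - f 0) * Real.cos t ^ n|)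
          ≤ ∫ t in (0:ℝ)..δ, ε' * Real.cos t ^ n := by
        refine intervalIntegral.integral_mono_on hδpos.le
          (((hf.sub continuous_const).mul (Real.continuous_cos.pow n)).abs.intervalIntegrable _ _)
          ((continuous_const.mul (Real.continuous_cos.pow n)).intervalIntegrable _ _)
          (fun x hx => ?_)
        have hx2 : 0 ≤ Real.cos x :=
          Real.cos_nonneg_of_mem_Icc ⟨by linarith [hx.1, pi_pos], le_trans hx.2 hδle⟩
        rw [abs_mul, abs_pow, abs_of_nonneg hx2]
        have : |f x - f 0| ≤ ε' := by
          have := @hδ0' x (by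
            rw [Real.dist_eq, sub_zero, abs_of_nonneg hx.1]
            calc x ≤ δ := hx.2
            _ ≤ δ0/2 := min_le_left _ _
            _ < δ0 := by linarith)
          rw [Real.dist_eq] at this
          exact this.le
        exact mul_le_mul_of_nonneg_right this (by positivity)
      have h3 : (∫ t in (0:ℝ)..δ, ε' * Real.cos t ^ n) ≤ ε' * W n := by
        rw [intervalIntegral.integral_const_mul]
        refine mul_le_mul_of_nonneg_left ?_ hε'0.le
        refine intervalIntegral.integral_mono_interval le_rfl hδpos.le hδle
          ?_ ((Real.continuous_cos.pow n).intervalIntegrable _ _)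
        filter_upwards [MeasureTheory.ae_restrict_mem measurableSet_Ioc] with x hx
        have hcx : 0 ≤ Real.cos x :=
          Real.cos_nonneg_of_mem_Icc ⟨by linarith [hx.1, pi_pos], hx.2⟩
        positivity
      linarith
    -- bound away from 0
    have hB2 : ∀ n : ℕ, |∫ t in δ..(π/2), (f t - f 0) * Real.cos t ^ n|
        ≤ (π/2) * (M * Real.cos δ ^ n) := by
      intro n
      have := intervalIntegral.norm_integral_le_of_norm_le_const
        (C := M * Real.cos δ ^ n) (a := δ) (b := π/2)
        (f := fun t => (f t - f 0) * Real.cos t ^ n) ?_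
      · refine le_trans this ?_
        have habs : |π/2 - δ| ≤ π/2 := by
          rw [abs_of_nonneg (by linarith)]; linarith
        calc M * Real.cos δ ^ n * |π/2 - δ| ≤ M * Real.cos δ ^ n * (π/2) := by
              refine mul_le_mul_of_nonneg_left habs (by positivity)
        _ = (π/2) * (M * Real.cos δ ^ n) := by ring
      · intro x hx
        rw [uIoc_of_le hδle] at hx
        have hxIcc : x ∈ Icc (0:ℝ) (π/2) := ⟨(hδpos.trans hx.1).le, hx.2⟩
        have hcx : 0 ≤ Real.cos x :=
          Real.cos_nonneg_of_mem_Icc ⟨by linarith [hx.1, hδpos, pi_pos], hx.2⟩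
        rw [norm_eq_abs, abs_mul, abs_pow, abs_of_nonneg hcx]
        refine mul_le_mul (hx0 hxIcc) ?_ (by positivity) hM0
        exact pow_le_pow_left₀ hcx
          (Real.cos_le_cos_of_nonneg_of_le_pi hδpos.le (by linarith [hx.2, pi_pos]) hx.1.le) n
    -- eventual bounds
    have hev1 : ∀ᶠ n : ℕ in atTop, Real.sqrt n * W n ≤ s + 1 := by
      filter_upwards [sqrt_W.eventually
        (eventually_le_nhds (lt_add_one (Real.sqrt (π/2))))] with n hn
      rw [hs]; exact hn
    have hev2 : ∀ᶠ n : ℕ in atTop,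
        Real.sqrt n * ((π/2) * (M * Real.cos δ ^ n)) < ε/2 := by
      have T : Tendsto (fun n : ℕ => (π/2) * M * ((n:ℝ) * Real.cos δ ^ n)) atTop (nhds 0) := by
        have := (tendsto_pow_const_mul_const_pow_of_lt_one 1 hcosδ0 hcosδ).const_mul ((π/2) * M)
        simpa using this
      have hev := T.eventually (eventually_lt_nhds (show (0:ℝ) < ε/2 by positivity))
      filter_upwards [hev, eventually_ge_atTop 1] with n hn hn1
      have hsn : Real.sqrt n ≤ (n:ℝ) := by
        have h1 : (1:ℝ) ≤ (n:ℝ) := by exact_mod_cast hn1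
        nlinarith [Real.sq_sqrt (le_trans zero_le_one h1 : (0:ℝ) ≤ n),
          Real.sqrt_nonneg (n:ℝ), Real.sqrt_le_sqrt h1]
      calc Real.sqrt n * ((π/2) * (M * Real.cos δ ^ n))
          ≤ (n:ℝ) * ((π/2) * (M * Real.cos δ ^ n)) := by
            refine mul_le_mul_of_nonneg_right hsn (by positivity)
        _ = (π/2) * M * ((n:ℝ) * Real.cos δ ^ n) := by ring
        _ < ε/2 := hn
    filter_upwards [hev1, hev2] with n hn1 hn2
    have hsplit2 : (∫ t in (0:ℝ)..(π/2), (f t - f 0) * Real.cos t ^ n)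
        = (∫ t in (0:ℝ)..δ, (f t - f 0) * Real.cos t ^ n)
          + ∫ t in δ..(π/2), (f t - f 0) * Real.cos t ^ n := by
      rw [intervalIntegral.integral_add_adjacent_intervals
        (f := fun t => (f t - f 0) * Real.cos t ^ n)
        (((hf.sub continuous_const).mul (Real.continuous_cos.pow n)).intervalIntegrable _ _)
        (((hf.sub continuous_const).mul (Real.continuous_cos.pow n)).intervalIntegrable _ _)]
    rw [norm_eq_abs, hsplit2, abs_mul, abs_of_nonneg (Real.sqrt_nonneg _)]
    calc Real.sqrt n * |(∫ t in (0:ℝ)..δ, (f t - f 0) * Real.cos t ^ n)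
          + ∫ t in δ..(π/2), (f t - f 0) * Real.cos t ^ n|
        ≤ Real.sqrt n * (ε' * W n + (π/2) * (M * Real.cos δ ^ n)) := by
          refine mul_le_mul_of_nonneg_left ?_ (Real.sqrt_nonneg _)
          exact le_trans (abs_add_le _ _) (add_le_add (hB1 n) (hB2 n))
      _ = ε' * (Real.sqrt n * W n) + Real.sqrt n * ((π/2) * (M * Real.cos δ ^ n)) := by ring
      _ ≤ ε' * (s + 1) + Real.sqrt n * ((π/2) * (M * Real.cos δ ^ n)) := by
          refine add_le_add (mul_le_mul_of_nonneg_left hn1 hε'0.le) le_rfl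
      _ < ε' * (s + 1) + ε/2 := by linarith
      _ = ε/2 + ε/2 := by rw [hkey]
      _ = ε := by ring
  have := main.add (sqrt_W.const_mul (f 0))
  rw [zero_add] at this
  exact this.congr fun n => by rw [hsplit n]; ring


noncomputable def In (n : ℕ) : ℝ := ∫ t in (0:ℝ)..π, Real.exp (-t) * Real.cos t ^ n

lemma exp_pi_lt : Real.exp (-π) < 1 := by
  rw [Real.exp_lt_one_iff]
  linarith [pi_pos]

lemma exp_pi_pos : 0 < Real.exp (-π) := Real.exp_pos _

lemma h_le_one (n : ℕ) : h n ≤ 1 := by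
  rw [h_eq]
  calc (∫ t in Ioi (0:ℝ), Real.exp (-t) * Real.cos t ^ n)
      ≤ ∫ t in Ioi (0:ℝ), Real.exp (-t) := by
        refine setIntegral_mono_on (int_exp_cospow n)
          ((exp_neg_integrableOn_Ioi 0 one_pos).congr_fun (by intro x _; simp)
            measurableSet_Ioi) measurableSet_Ioi (fun t _ => ?_)
        have h1 : Real.cos t ^ n ≤ 1 := by
          calc Real.cos t ^ n ≤ |Real.cos t ^ n| := le_abs_self _
          _ = |Real.cos t| ^ n := abs_pow _ _
          _ ≤ 1 ^ n := pow_le_pow_left₀ (abs_nonneg _) (abs_cos_le_one t) n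
          _ = 1 := one_pow n
        calc Real.exp (-t) * Real.cos t ^ n ≤ Real.exp (-t) * 1 :=
          mul_le_mul_of_nonneg_left h1 (Real.exp_pos _).le
        _ = Real.exp (-t) := mul_one _
  _ = 1 := integral_exp_neg_Ioi_zero

lemma shift (n : ℕ) : (∫ t in Ioi (π:ℝ), Real.exp (-t) * Real.cos t ^ n)
    = (-1:ℝ) ^ n * Real.exp (-π) * h n := by
  have hmap : Measure.map (fun x : ℝ => x + π) volume = volume :=
    (measurePreserving_add_right volume π).map_eq
  have hemb : MeasurableEmbedding (fun x : ℝ => x + π) :=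
    (MeasurableEquiv.addRight π).measurableEmbedding
  have hpre : (fun x : ℝ => x + π) ⁻¹' (Ioi π) = Ioi 0 := by
    ext x; simp [mem_preimage, mem_Ioi]
  calc (∫ t in Ioi (π:ℝ), Real.exp (-t) * Real.cos t ^ n)
      = ∫ t in Ioi (π:ℝ), Real.exp (-t) * Real.cos t ^ n ∂(Measure.map (fun x : ℝ => x + π) volume) := by
        rw [hmap]
    _ = ∫ x in (fun x : ℝ => x + π) ⁻¹' (Ioi π), Real.exp (-(x + π)) * Real.cos (x + π) ^ n := by
        rw [hemb.setIntegral_map]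
    _ = ∫ x in Ioi (0:ℝ), (-1:ℝ) ^ n * Real.exp (-π) * (Real.exp (-x) * Real.cos x ^ n) := by
        rw [hpre]
        refine setIntegral_congr_fun measurableSet_Ioi (fun x _ => ?_)
        rw [Real.cos_add_pi, show -(x + π) = -x + -π by ring, Real.exp_add, neg_pow]
        ring
    _ = (-1:ℝ) ^ n * Real.exp (-π) * h n := by
        rw [MeasureTheory.integral_const_mul, ← h_eq]

lemma h_solve (n : ℕ) : h n = In n / (1 - (-1:ℝ) ^ n * Real.exp (-π)) := by
  have habs : |(-1:ℝ) ^ n * Real.exp (-π)| < 1 := by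
    rw [abs_mul, abs_pow, abs_neg, abs_one, one_pow, one_mul,
      abs_of_pos exp_pi_pos]
    exact exp_pi_lt
  have hne : 1 - (-1:ℝ) ^ n * Real.exp (-π) ≠ 0 := by
    have := abs_lt.mp habs
    linarith [this.1, this.2]
  have hsplit : h n = In n + (-1:ℝ) ^ n * Real.exp (-π) * h n := by
    conv_lhs => rw [h_eq]
    have hu : Ioc (0:ℝ) π ∪ Ioi π = Ioi 0 := Ioc_union_Ioi_eq_Ioi pi_pos.le
    have hd : Disjoint (Ioc (0:ℝ) π) (Ioi π) := Ioc_disjoint_Ioi le_rfl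
    have h1 : IntegrableOn (fun t : ℝ => Real.exp (-t) * Real.cos t ^ n) (Ioc 0 π) :=
      (int_exp_cospow n).mono_set Ioc_subset_Ioi_self
    have h2 : IntegrableOn (fun t : ℝ => Real.exp (-t) * Real.cos t ^ n) (Ioi π) :=
      (int_exp_cospow n).mono_set (Ioi_subset_Ioi pi_pos.le)
    calc (∫ t in Ioi (0:ℝ), Real.exp (-t) * Real.cos t ^ n)
        = ∫ t in Ioc (0:ℝ) π ∪ Ioi π, Real.exp (-t) * Real.cos t ^ n := by rw [hu]
      _ = (∫ t in Ioc (0:ℝ) π, Real.exp (-t) * Real.cos t ^ n)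
          + ∫ t in Ioi (π:ℝ), Real.exp (-t) * Real.cos t ^ n :=
            setIntegral_union hd measurableSet_Ioi h1 h2
      _ = In n + (-1:ℝ) ^ n * Real.exp (-π) * h n := by
          rw [shift, In, intervalIntegral.integral_of_le pi_pos.le]
  rw [eq_div_iff hne]
  linear_combination hsplit

noncomputable def J (n : ℕ) : ℝ := ∫ t in (0:ℝ)..(π/2), Real.exp (-t) * Real.cos t ^ n
noncomputable def K (n : ℕ) : ℝ := ∫ t in (0:ℝ)..(π/2), Real.exp t * Real.cos t ^ n

lemma In_half (n : ℕ) : In n = J n + (-1:ℝ) ^ n * Real.exp (-π) * K n := by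
  have c1 : Continuous fun t : ℝ => Real.exp (-t) * Real.cos t ^ n := by continuity
  have hsplit : In n = J n + ∫ t in (π/2)..π, Real.exp (-t) * Real.cos t ^ n := by
    rw [In, J, ← intervalIntegral.integral_add_adjacent_intervals
      (c1.intervalIntegrable 0 (π/2)) (c1.intervalIntegrable (π/2) π)]
  have hrefl : (∫ t in (π/2)..π, Real.exp (-t) * Real.cos t ^ n)
      = (-1:ℝ) ^ n * Real.exp (-π) * K n := by
    have := intervalIntegral.integral_comp_sub_left (a := 0) (b := π/2)
      (fun u => Real.exp (-u) * Real.cos u ^ n) π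
    rw [show π - π/2 = π/2 by ring, sub_zero] at this
    rw [← this, K, ← intervalIntegral.integral_const_mul]
    refine intervalIntegral.integral_congr (fun x _ => ?_)
    rw [Real.cos_pi_sub, show -(π - x) = x + -π by ring, Real.exp_add, neg_pow]
    ring
  rw [hsplit, hrefl]

lemma tendsto_sqrtJ :
    Tendsto (fun n : ℕ => Real.sqrt n * J n) atTop (nhds (Real.sqrt (π/2))) := by
  have := loc (fun t => Real.exp (-t)) (by continuity)
  simpa [J] using this

lemma tendsto_sqrtK :
    Tendsto (fun n : ℕ => Real.sqrt n * K n) atTop (nhds (Real.sqrt (π/2))) := by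
  have := loc Real.exp Real.continuous_exp
  simpa [K] using this

noncomputable def ce : ℝ := Real.sqrt (π/2) * (1 + Real.exp (-π)) / (1 - Real.exp (-π))
noncomputable def co : ℝ := Real.sqrt (π/2) * (1 - Real.exp (-π)) / (1 + Real.exp (-π))

lemma hsub2 : Tendsto (fun m : ℕ => 2*m) atTop atTop :=
  tendsto_atTop_mono (fun m => by simp only [id_eq]; omega) tendsto_id

lemma hsub2' : Tendsto (fun m : ℕ => 2*m+1) atTop atTop :=
  tendsto_atTop_mono (fun m => by simp only [id_eq]; omega) tendsto_id

lemma one_sub_ne : (1:ℝ) - Real.exp (-π) ≠ 0 := by linarith [exp_pi_lt]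
lemma one_add_ne : (1:ℝ) + Real.exp (-π) ≠ 0 := by linarith [exp_pi_pos]

lemma tendsto_even :
    Tendsto (fun m : ℕ => Real.sqrt ((2*m : ℕ)) * h (2*m)) atTop (nhds ce) := by
  have A := tendsto_sqrtJ.comp hsub2
  have B := tendsto_sqrtK.comp hsub2
  have C := (A.add (B.const_mul (Real.exp (-π)))).div_const (1 - Real.exp (-π))
  have hc : (Real.sqrt (π/2) + Real.exp (-π) * Real.sqrt (π/2)) / (1 - Real.exp (-π)) = ce := by
    rw [ce]; ring
  rw [hc] at C
  refine C.congr fun m => ?_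
  simp only [Function.comp]
  rw [h_solve (2*m), In_half, show ((-1:ℝ))^(2*m) = 1 by rw [pow_mul]; norm_num]
  field_simp

lemma tendsto_odd :
    Tendsto (fun m : ℕ => Real.sqrt ((2*m+1 : ℕ)) * h (2*m+1)) atTop (nhds co) := by
  have A := tendsto_sqrtJ.comp hsub2'
  have B := tendsto_sqrtK.comp hsub2'
  have C := (A.sub (B.const_mul (Real.exp (-π)))).div_const (1 + Real.exp (-π))
  have hc : (Real.sqrt (π/2) - Real.exp (-π) * Real.sqrt (π/2)) / (1 + Real.exp (-π)) = co := by
    rw [co]; ring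
  rw [hc] at C
  refine C.congr fun m => ?_
  simp only [Function.comp]
  rw [h_solve (2*m+1), In_half,
    show ((-1:ℝ))^(2*m+1) = -1 by rw [pow_succ, pow_mul]; norm_num]
  field_simp
  rw [sub_neg_eq_add, mul_div_cancel_left₀ _ one_add_ne]
  ring

lemma sqrt_inv_zero {f : ℕ → ℕ} (hf : Tendsto f atTop atTop) :
    Tendsto (fun m : ℕ => (Real.sqrt ((f m : ℕ)))⁻¹) atTop (nhds 0) := by
  have h0 : Tendsto (fun m : ℕ => (((f m : ℕ) : ℝ))⁻¹) atTop (nhds 0) :=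
    (tendsto_natCast_atTop_atTop.comp hf).inv_tendsto_atTop
  have h1 := h0.sqrt
  rw [Real.sqrt_zero] at h1
  exact h1.congr fun m => Real.sqrt_inv _

lemma h_even_zero : Tendsto (fun m : ℕ => h (2*m)) atTop (nhds 0) := by
  have := tendsto_even.mul (sqrt_inv_zero hsub2)
  rw [mul_zero] at this
  refine this.congr' ?_
  filter_upwards [eventually_ge_atTop 1] with m hm
  have hne : Real.sqrt ((2*m : ℕ)) ≠ 0 := by
    refine (Real.sqrt_pos.mpr ?_).ne'
    have : (1:ℝ) ≤ (2*m : ℕ) := by exact_mod_cast Nat.one_le_iff_ne_zero.mpr (by omega)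
    linarith
  field_simp

lemma h_odd_zero : Tendsto (fun m : ℕ => h (2*m+1)) atTop (nhds 0) := by
  have := tendsto_odd.mul (sqrt_inv_zero hsub2')
  rw [mul_zero] at this
  refine this.congr' ?_
  filter_upwards [eventually_ge_atTop 1] with m hm
  have hne : Real.sqrt ((2*m+1 : ℕ)) ≠ 0 := by
    refine (Real.sqrt_pos.mpr ?_).ne'
    have : (1:ℝ) ≤ (2*m+1 : ℕ) := by exact_mod_cast Nat.one_le_iff_ne_zero.mpr (by omega)
    linarith
  field_simp

noncomputable def ν (n : ℕ) : ℝ := (1 - Real.sqrt (1 - h (n - 3))) / 2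

lemma assemble (c : ℝ) (N : ℕ → ℕ) (M : ℕ → ℕ)
    (hNM : ∀ᶠ n in atTop, N n - 3 = M n)
    (hM1 : ∀ᶠ n in atTop, 1 ≤ M n)
    (hlim : Tendsto (fun n => Real.sqrt ((M n : ℕ)) * h (M n)) atTop (nhds c))
    (hzero : Tendsto (fun n => h (M n)) atTop (nhds 0))
    (hratio : Tendsto (fun n => Real.sqrt ((N n : ℕ)) / Real.sqrt ((M n : ℕ))) atTop (nhds 1)) :
    Tendsto (fun n => Real.sqrt ((N n : ℕ)) * ν (N n)) atTop (nhds (c / 4)) := by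
  have hden : Tendsto (fun n => 2 * (1 + Real.sqrt (1 - h (M n)))) atTop (nhds 4) := by
    have h1 : Tendsto (fun n => (1:ℝ) - h (M n)) atTop (nhds 1) := by
      simpa using tendsto_const_nhds.sub hzero
    have h2 := h1.sqrt
    rw [Real.sqrt_one] at h2
    have h3 := ((tendsto_const_nhds (x := (1:ℝ))).add h2).const_mul 2
    norm_num at h3
    exact h3
  have hmain := ((hratio.mul hlim).div hden (by norm_num) : Tendsto _ atTop (nhds (1 * c / 4)))
  rw [one_mul] at hmain
  refine hmain.congr' ?_
  filter_upwards [hNM, hM1] with n h1 h2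
  have hx1 : h (M n) ≤ 1 := h_le_one _
  have hsq : Real.sqrt (1 - h (M n)) ^ 2 = 1 - h (M n) := Real.sq_sqrt (by linarith)
  have hpos : 0 < 1 + Real.sqrt (1 - h (M n)) := by positivity
  have hMpos : (0:ℝ) < Real.sqrt ((M n : ℕ)) := by
    refine Real.sqrt_pos.mpr ?_
    exact_mod_cast Nat.lt_of_lt_of_le Nat.zero_lt_one h2
  have key : 1 - Real.sqrt (1 - h (M n)) = h (M n) / (1 + Real.sqrt (1 - h (M n))) := by
    rw [eq_div_iff hpos.ne']
    nlinarith [hsq]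
  show Real.sqrt ((N n : ℕ)) / Real.sqrt ((M n : ℕ)) * (Real.sqrt ((M n : ℕ)) * h (M n))
      / (2 * (1 + Real.sqrt (1 - h (M n)))) = Real.sqrt ((N n : ℕ)) * ν (N n)
  rw [ν, h1, key]
  field_simp

lemma ratio_gen (a b : ℝ) :
    Tendsto (fun n : ℕ => (2*(n:ℝ) + a) / (2*(n:ℝ) + b)) atTop (nhds 1) := by
  have d : Tendsto (fun n : ℕ => 2*(n:ℝ) + b) atTop atTop :=
    tendsto_atTop_add_const_right _ b (tendsto_natCast_atTop_atTop.const_mul_atTop two_pos)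
  have d0 : Tendsto (fun n : ℕ => (2*(n:ℝ) + b)⁻¹) atTop (nhds 0) := d.inv_tendsto_atTop
  have l : Tendsto (fun n : ℕ => 1 + (a - b) * (2*(n:ℝ) + b)⁻¹) atTop (nhds 1) := by
    have := (d0.const_mul (a - b)).const_add 1
    simpa using this
  refine l.congr' ?_
  filter_upwards [d.eventually_gt_atTop 0] with n hn
  field_simp
  ring

lemma ratio_odd :
    Tendsto (fun n : ℕ => Real.sqrt ((2*n+1 : ℕ)) / Real.sqrt ((2*(n-1) : ℕ)))
      atTop (nhds 1) := by
  have l := (ratio_gen 1 (-2)).sqrt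
  rw [Real.sqrt_one] at l
  refine l.congr' ?_
  filter_upwards [eventually_ge_atTop 2] with n hn
  have h1 : ((2*n+1 : ℕ) : ℝ) = 2*(n:ℝ) + 1 := by push_cast; ring
  have h2 : ((2*(n-1) : ℕ) : ℝ) = 2*(n:ℝ) + (-2) := by
    push_cast [Nat.cast_sub (by omega : 1 ≤ n)]; ring
  rw [← h1, ← h2, Real.sqrt_div (Nat.cast_nonneg _)]

lemma ratio_even :
    Tendsto (fun n : ℕ => Real.sqrt ((2*n : ℕ)) / Real.sqrt ((2*(n-2)+1 : ℕ)))
      atTop (nhds 1) := by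
  have l := (ratio_gen 0 (-3)).sqrt
  rw [Real.sqrt_one] at l
  refine l.congr' ?_
  filter_upwards [eventually_ge_atTop 2] with n hn
  have h1 : ((2*n : ℕ) : ℝ) = 2*(n:ℝ) + 0 := by push_cast; ring
  have h2 : ((2*(n-2)+1 : ℕ) : ℝ) = 2*(n:ℝ) + (-3) := by
    push_cast [Nat.cast_sub (by omega : 2 ≤ n)]; ring
  rw [← h1, ← h2, Real.sqrt_div (Nat.cast_nonneg _)]

lemma part1 : Tendsto (fun n : ℕ => Real.sqrt (2 * n + 1) * ν (2 * n + 1)) atTop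
    (nhds (ce / 4)) := by
  have := assemble ce (fun n => 2*n+1) (fun n => 2*(n-1))
    (Eventually.of_forall fun n => by show 2*n+1-3 = 2*(n-1); omega)
    (by filter_upwards [eventually_ge_atTop 2] with n hn; show 1 ≤ 2*(n-1); omega)
    (tendsto_even.comp (tendsto_sub_atTop_nat 1))
    (h_even_zero.comp (tendsto_sub_atTop_nat 1))
    ratio_odd
  refine this.congr fun n => ?_
  have : ((2*n+1 : ℕ) : ℝ) = 2*(n:ℝ) + 1 := by push_cast; ring
  rw [this]

lemma part2 : Tendsto (fun n : ℕ => Real.sqrt (2 * n) * ν (2 * n)) atTop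
    (nhds (co / 4)) := by
  have := assemble co (fun n => 2*n) (fun n => 2*(n-2)+1)
    (by filter_upwards [eventually_ge_atTop 2] with n hn; show 2*n-3 = 2*(n-2)+1; omega)
    (by filter_upwards [eventually_ge_atTop 2] with n hn; show 1 ≤ 2*(n-2)+1; omega)
    (tendsto_odd.comp (tendsto_sub_atTop_nat 2))
    (h_odd_zero.comp (tendsto_sub_atTop_nat 2))
    ratio_even
  refine this.congr fun n => ?_
  have : ((2*n : ℕ) : ℝ) = 2*(n:ℝ) := by push_cast; ring
  rw [this]

lemma sqrt_two_pi : Real.sqrt (2*π) = 2 * Real.sqrt (π/2) := by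
  rw [show (2:ℝ)*π = 2^2*(π/2) by ring, Real.sqrt_mul (by norm_num),
    Real.sqrt_sq (by norm_num : (0:ℝ) ≤ 2)]

lemma coth_key : (1 + Real.exp (-π)) * Real.sinh (π/2)
    = (1 - Real.exp (-π)) * Real.cosh (π/2) := by
  have hee : Real.exp (π/2) * Real.exp (-(π/2)) = 1 := by
    rw [← Real.exp_add]; simp
  have he : Real.exp (-π) = Real.exp (-(π/2)) * Real.exp (-(π/2)) := by
    rw [← Real.exp_add]; ring_nf
  rw [Real.sinh_eq, Real.cosh_eq, he]
  linear_combination Real.exp (-(π/2)) * hee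

lemma const_even : ce / 4 = Real.sqrt (2*π) / 8 * (Real.cosh (π/2) / Real.sinh (π/2)) := by
  have hsinh : Real.sinh (π/2) ≠ 0 := (Real.sinh_pos_iff.mpr (by positivity)).ne'
  have hratio : (1 + Real.exp (-π)) / (1 - Real.exp (-π))
      = Real.cosh (π/2) / Real.sinh (π/2) := by
    rw [div_eq_div_iff one_sub_ne hsinh]
    linear_combination coth_key
  rw [ce, sqrt_two_pi, mul_div_assoc, hratio]
  ring

lemma const_odd : co / 4 = Real.sqrt (2*π) / 8 * Real.tanh (π/2) := by
  have hcosh : Real.cosh (π/2) ≠ 0 := (Real.cosh_pos (π/2)).ne'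
  have hratio : (1 - Real.exp (-π)) / (1 + Real.exp (-π))
      = Real.sinh (π/2) / Real.cosh (π/2) := by
    rw [div_eq_div_iff one_add_ne hcosh]
    linear_combination -coth_key
  rw [co, sqrt_two_pi, mul_div_assoc, hratio, Real.tanh_eq_sinh_div_cosh]
  ring

theorem stmt_11 :
    Tendsto (fun n : ℕ => Real.sqrt (2 * n + 1) * ν (2 * n + 1)) atTop
      (nhds (Real.sqrt (2 * π) / 8 * (Real.cosh (π / 2) / Real.sinh (π / 2)))) ∧
    Tendsto (fun n : ℕ => Real.sqrt (2 * n) * ν (2 * n)) atTop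
      (nhds (Real.sqrt (2 * π) / 8 * Real.tanh (π / 2))) :=
  ⟨const_even ▸ part1, const_odd ▸ part2⟩
end

section
/- For integers n ≥ 3, define ν_G(n) = (1 + (n−2)·h(n−1)) / (n + (n−2)·h(n−1)), where h(m) = 2^{-m} · Σ_{j=0}^{m} C(m,j)/(1 + (m−2j)²). Then ν_G(n) > 1/(√n + 1) for all n ≥ 3. -/
set_option maxHeartbeats 1000000

noncomputable def νG (n : ℕ) : ℝ :=
  (1 + ((n : ℝ) - 2) * h (n - 1)) / ((n : ℝ) + ((n : ℝ) - 2) * h (n - 1))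

noncomputable def B (m : ℕ) : ℝ := (Real.sqrt ((m:ℝ)+1) - 1) / ((m:ℝ) - 1)


lemma coeff_id (m j : ℕ) :
    (j+1) * ((m+1) - j) * (m+2).choose (j+1) = (m+2) * ((m+1) * m.choose j) := by
  have h1 : (m+2) * (m+1).choose j = (m+2).choose (j+1) * (j+1) := Nat.add_one_mul_choose_eq (m+1) j
  have h2 : m.choose j * (m+1) = (m+1).choose j * (m+1-j) := Nat.choose_mul_succ_eq m j
  calc (j+1) * ((m+1) - j) * (m+2).choose (j+1)
      = ((m+1)-j) * ((m+2).choose (j+1) * (j+1)) := by ring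
    _ = ((m+1)-j) * ((m+2) * (m+1).choose j) := by rw [h1]
    _ = (m+2) * ((m+1).choose j * (m+1-j)) := by ring
    _ = (m+2) * (m.choose j * (m+1)) := by rw [h2]
    _ = (m+2) * ((m+1) * m.choose j) := by ring

lemma sum_rec (m : ℕ) :
    (1 + ((m:ℝ)+2)^2) * ∑ j ∈ Finset.range (m+3), ((m+2).choose j : ℝ) / (1 + (((m:ℝ)+2) - 2*j)^2)
      = 2^(m+2) + 4*((m:ℝ)+2)*((m:ℝ)+1) * ∑ j ∈ Finset.range (m+1), (m.choose j : ℝ) / (1 + ((m:ℝ) - 2*j)^2) := by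
  set g : ℕ → ℝ := fun j => (4*(j:ℝ)*(((m:ℝ)+2)-j) * ((m+2).choose j : ℝ)) / (1 + (((m:ℝ)+2) - 2*j)^2) with hg
  have key : ∀ j ∈ Finset.range (m+3),
      (1 + ((m:ℝ)+2)^2) * (((m+2).choose j : ℝ) / (1 + (((m:ℝ)+2) - 2*j)^2))
      = ((m+2).choose j : ℝ) + g j := by
    intro j _
    have hd : (0:ℝ) < 1 + (((m:ℝ)+2) - 2*j)^2 := by positivity
    rw [hg]
    field_simp
    ring
  rw [Finset.mul_sum, Finset.sum_congr rfl key, Finset.sum_add_distrib]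
  have hc : ∑ j ∈ Finset.range (m+3), (((m+2).choose j : ℝ)) = 2^(m+2) := by
    rw [← Nat.cast_sum, Nat.sum_range_choose (m+2)]
    push_cast; ring
  rw [hc]
  congr 1
  have h0 : g 0 = 0 := by simp [hg]
  have hlast : g (m+2) = 0 := by
    rw [hg]; push_cast; ring_nf
  rw [Finset.sum_range_succ' g (m+2), h0, add_zero,
     Finset.sum_range_succ (fun j => g (j+1)) (m+1)]
  show (∑ j ∈ Finset.range (m+1), g (j+1)) + g (m+2) = _
  rw [hlast, add_zero, Finset.mul_sum]
  apply Finset.sum_congr rfl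
  intro j hj
  have hjm : j ≤ m := by simpa using Nat.lt_succ_iff.mp (Finset.mem_range.mp hj)
  rw [hg]
  have hcast : (4*((j+1:ℕ):ℝ)*(((m:ℝ)+2)-((j+1:ℕ):ℝ)) * ((m+2).choose (j+1) : ℝ))
      = 4*((m:ℝ)+2)*((m:ℝ)+1) * (m.choose j : ℝ) := by
    have := coeff_id m j
    have hc2 : (((j+1) * ((m+1) - j) * (m+2).choose (j+1) : ℕ) : ℝ)
        = (((m+2) * ((m+1) * m.choose j) : ℕ) : ℝ) := by rw [this]
    push_cast [Nat.cast_sub (by omega : j ≤ m+1)] at hc2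
    push_cast
    nlinarith [hc2]
  show (4*((j+1:ℕ):ℝ)*(((m:ℝ)+2)-((j+1:ℕ):ℝ)) * ((m+2).choose (j+1) : ℝ)) / (1 + (((m:ℝ)+2) - 2*((j+1:ℕ):ℝ))^2)
      = 4*((m:ℝ)+2)*((m:ℝ)+1) * ((m.choose j : ℝ) / (1 + ((m:ℝ) - 2*(j:ℝ))^2))
  rw [hcast]
  have : (((m:ℝ)+2) - 2*((j+1:ℕ):ℝ)) = ((m:ℝ) - 2*j) := by push_cast; ring
  rw [this]
  ring

lemma h_rec (m : ℕ) :
    h (m+2) = (1 + ((m:ℝ)+2)*((m:ℝ)+1) * h m) / (1 + ((m:ℝ)+2)^2) := by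
  have hs := sum_rec m
  have hden : (0:ℝ) < 1 + ((m:ℝ)+2)^2 := by positivity
  have h2 : (0:ℝ) < 2 ^ m := by positivity
  have hm2 : h (m+2) = (∑ j ∈ Finset.range (m+3), ((m+2).choose j : ℝ) / (1 + (((m:ℝ)+2) - 2*j)^2)) / 2^(m+2) := by
    simp only [h]
    congr 1
    apply Finset.sum_congr rfl
    intro j _
    push_cast
    ring_nf
  have hmm : ∑ j ∈ Finset.range (m+1), (m.choose j : ℝ) / (1 + ((m:ℝ) - 2*j)^2) = 2^m * h m := by
    simp only [h]
    field_simp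
  rw [hmm] at hs
  rw [hm2]
  rw [div_eq_div_iff (by positivity) (ne_of_gt hden)]
  rw [eq_comm]
  calc (1 + ((m:ℝ)+2)*((m:ℝ)+1) * h m) * 2^(m+2)
      = (2^(m+2) + 4*((m:ℝ)+2)*((m:ℝ)+1) * (2^m * h m)) := by ring
    _ = (1 + ((m:ℝ)+2)^2) * ∑ j ∈ Finset.range (m+3), ((m+2).choose j : ℝ) / (1 + (((m:ℝ)+2) - 2*j)^2) := hs.symm
    _ = _ := by ring





lemma step (m : ℕ) (hm : 4 ≤ m) (ih : B m ≤ h m) : B (m+2) ≤ h (m+2) := by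
  rw [h_rec]
  set M : ℝ := (m:ℝ) with hM
  have hM4 : (4:ℝ) ≤ M := by rw [hM]; exact_mod_cast hm
  set a : ℝ := Real.sqrt (M+1) with ha
  set b : ℝ := Real.sqrt (M+3) with hb
  have ha2 : a^2 = M+1 := Real.sq_sqrt (by linarith)
  have hb2 : b^2 = M+3 := Real.sq_sqrt (by linarith)
  have ha0 : 0 < a := Real.sqrt_pos.mpr (by linarith)
  have hb0 : 0 < b := Real.sqrt_pos.mpr (by linarith)
  have ha1 : 2 < a := by nlinarith
  have hab : a*b ≤ M+2 := by nlinarith [sq_nonneg (a*b), sq_nonneg (a-b)]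
  have h2a : 2*a ≤ M+3 := by nlinarith
  have hBm : B m = (a-1)/(M-1) := by rw [B, ha, hM]
  have hB2 : B (m+2) = (b-1)/(M+1) := by
    rw [B, hb, hM]; push_cast; ring_nf
  rw [hB2]
  have hden : (0:ℝ) < 1 + (M+2)^2 := by positivity
  rw [div_le_div_iff₀ (by linarith) hden]
  have hhm : (a-1)/(M-1) ≤ h m := hBm ▸ ih
  have hstep1 : (M+2)*(M+1)*((a-1)/(M-1)) ≤ (M+2)*(M+1)*(h m) := by
    apply mul_le_mul_of_nonneg_left hhm
    nlinarith
  have h1 : a*(b-1) ≤ M+2-a := by nlinarith [hab]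
  have c1pos : (0:ℝ) ≤ (M-1)*(1+(M+2)^2) := by nlinarith
  have t1 := mul_le_mul_of_nonneg_left h1 c1pos
  have t2 : (0:ℝ) ≤ 2*(M+2)*(M+3-2*a) := by nlinarith
  have t3 : (M+2)*(M+1)^2 * a^2 = (M+2)*(M+1)^2*(M+1) := by rw [ha2]
  have hP : a * ((M-1)*((b-1)*(1+(M+2)^2))) ≤ a * ((M-1)*(M+1) + (M+2)*(M+1)^2*(a-1)) := by
    linarith [t1, t2, t3]
  have hP' : (M-1)*((b-1)*(1+(M+2)^2)) ≤ (M-1)*(M+1) + (M+2)*(M+1)^2*(a-1) :=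
    le_of_mul_le_mul_left hP ha0
  have hM1 : M - 1 ≠ 0 := by linarith
  have hr : (M-1)*((1 + (M+2)*(M+1)*((a-1)/(M-1)))*(M+1)) = (M-1)*(M+1) + (M+2)*(M+1)^2*(a-1) := by
    field_simp
  have hkey : (b-1) * (1 + (M+2)^2) ≤ (1 + (M+2)*(M+1)*((a-1)/(M-1))) * (M+1) := by
    have := hr ▸ hP'
    exact le_of_mul_le_mul_left this (by linarith)
  calc (b-1) * (1 + (M+2)^2) ≤ (1 + (M+2)*(M+1)*((a-1)/(M-1))) * (M+1) := hkey
    _ ≤ (1 + (M+2)*(M+1)* h m) * (M+1) := by nlinarith [hstep1]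



lemma h2val : h 2 = 3/5 := by norm_num [h, Finset.sum_range_succ, Nat.choose]
lemma h3val : h 3 = 2/5 := by norm_num [h, Finset.sum_range_succ, Nat.choose]
lemma h4val : h 4 = 41/85 := by norm_num [h, Finset.sum_range_succ, Nat.choose]
lemma h5val : h 5 = 9/26 := by norm_num [h, Finset.sum_range_succ, Nat.choose]
lemma h7val : h 7 = 101/325 := by norm_num [h, Finset.sum_range_succ, Nat.choose]





lemma base4 : B 4 ≤ h 4 := by
  rw [B, h4val]
  have hs : Real.sqrt (((4:ℕ):ℝ)+1) ≤ 208/85 := by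
    have h1 : Real.sqrt (((4:ℕ):ℝ)+1) = Real.sqrt 5 := by norm_num
    rw [h1]
    nlinarith [Real.sq_sqrt (show (0:ℝ) ≤ 5 by norm_num), Real.sqrt_nonneg 5]
  have : ((4:ℕ):ℝ) - 1 = 3 := by norm_num
  rw [this, div_le_iff₀ (by norm_num)]
  norm_num at hs ⊢
  linarith

lemma base7 : B 7 ≤ h 7 := by
  rw [B, h7val]
  have hs : Real.sqrt (((7:ℕ):ℝ)+1) ≤ 931/325 := by
    have h1 : Real.sqrt (((7:ℕ):ℝ)+1) = Real.sqrt 8 := by norm_num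
    rw [h1]
    nlinarith [Real.sq_sqrt (show (0:ℝ) ≤ 8 by norm_num), Real.sqrt_nonneg 8]
  have : ((7:ℕ):ℝ) - 1 = 6 := by norm_num
  rw [this, div_le_iff₀ (by norm_num)]
  norm_num at hs ⊢
  linarith

lemma chain_even (k : ℕ) : B (4+2*k) ≤ h (4+2*k) := by
  induction k with
  | zero => exact base4
  | succ n ih =>
      have e : 4+2*(n+1) = (4+2*n)+2 := by omega
      rw [e]
      exact step (4+2*n) (by omega) ih

lemma chain_odd (k : ℕ) : B (7+2*k) ≤ h (7+2*k) := by
  induction k with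
  | zero => exact base7
  | succ n ih =>
      have e : 7+2*(n+1) = (7+2*n)+2 := by omega
      rw [e]
      exact step (7+2*n) (by omega) ih

lemma bound (m : ℕ) (hm : 6 ≤ m) : B m ≤ h m := by
  rcases Nat.even_or_odd m with ⟨t, ht⟩ | ⟨t, ht⟩
  · obtain ⟨k, hk⟩ : ∃ k, m = 4 + 2*k := ⟨(m-4)/2, by omega⟩
    rw [hk]; exact chain_even k
  · obtain ⟨k, hk⟩ : ∃ k, m = 7 + 2*k := ⟨(m-7)/2, by omega⟩
    rw [hk]; exact chain_odd k






theorem stmt_12 (n : ℕ) (hn : 3 ≤ n) : 1 / (Real.sqrt n + 1) < νG n := by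
  by_cases hn6 : n ≤ 6
  · interval_cases n
    · -- n = 3
      have hv : νG 3 = 4/9 := by rw [νG]; norm_num [h2val]
      rw [hv]
      have h1 : (0:ℝ) < Real.sqrt ((3:ℕ):ℝ) + 1 := by positivity
      rw [div_lt_iff₀ h1]
      have : Real.sqrt ((3:ℕ):ℝ) = Real.sqrt 3 := by norm_num
      rw [this]
      nlinarith [Real.sq_sqrt (show (0:ℝ) ≤ 3 by norm_num), Real.sqrt_nonneg 3]
    · have hv : νG 4 = 3/8 := by rw [νG]; norm_num [h3val]
      rw [hv]
      have h1 : (0:ℝ) < Real.sqrt ((4:ℕ):ℝ) + 1 := by positivity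
      rw [div_lt_iff₀ h1]
      have : Real.sqrt ((4:ℕ):ℝ) = 2 := by
        rw [show (((4:ℕ)):ℝ) = 2^2 by norm_num]
        exact Real.sqrt_sq (by norm_num)
      rw [this]; norm_num
    · have hv : νG 5 = 52/137 := by rw [νG]; norm_num [h4val]
      rw [hv]
      have h1 : (0:ℝ) < Real.sqrt ((5:ℕ):ℝ) + 1 := by positivity
      rw [div_lt_iff₀ h1]
      have : Real.sqrt ((5:ℕ):ℝ) = Real.sqrt 5 := by norm_num
      rw [this]
      nlinarith [Real.sq_sqrt (show (0:ℝ) ≤ 5 by norm_num), Real.sqrt_nonneg 5]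
    · have hv : νG 6 = 31/96 := by rw [νG]; norm_num [h5val]
      rw [hv]
      have h1 : (0:ℝ) < Real.sqrt ((6:ℕ):ℝ) + 1 := by positivity
      rw [div_lt_iff₀ h1]
      have : Real.sqrt ((6:ℕ):ℝ) = Real.sqrt 6 := by norm_num
      rw [this]
      nlinarith [Real.sq_sqrt (show (0:ℝ) ≤ 6 by norm_num), Real.sqrt_nonneg 6]
  · push_neg at hn6
    have hn7 : 7 ≤ n := hn6
    have hb := bound (n-1) (by omega)
    have hc1 : ((n-1:ℕ):ℝ) = (n:ℝ) - 1 := by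
      rw [Nat.cast_sub (by omega : 1 ≤ n)]; norm_num
    have hB : B (n-1) = (Real.sqrt n - 1) / ((n:ℝ) - 2) := by
      rw [B, hc1]; ring_nf
    rw [hB] at hb
    set s : ℝ := Real.sqrt n with hs
    have hs2 : s^2 = n := Real.sq_sqrt (by positivity)
    have hn7' : (7:ℝ) ≤ (n:ℝ) := by exact_mod_cast hn7
    have hs0 : 0 ≤ s := Real.sqrt_nonneg _
    have hsgt : 2 < s := by nlinarith
    have hc2 : (0:ℝ) < (n:ℝ) - 2 := by linarith
    set t : ℝ := ((n:ℝ) - 2) * h (n-1) with hts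
    have ht : s - 1 ≤ t := by
      rw [hts]
      have := mul_le_mul_of_nonneg_left hb (le_of_lt hc2)
      calc s - 1 = ((n:ℝ)-2) * ((s-1)/((n:ℝ)-2)) := by field_simp
        _ ≤ t := this
    rw [νG]
    have hdenpos : (0:ℝ) < (n:ℝ) + t := by nlinarith
    rw [div_lt_div_iff₀ (by positivity) hdenpos]
    have hst : s*(s-1) ≤ s*t := mul_le_mul_of_nonneg_left ht hs0
    nlinarith [hst, hs2]
end
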